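/- The map sending (λ,μ,κ) ∈ H_ℝ^{(g,h)} to the block matrix [[E_g, 0, 0, μᵀ], [λ, E_h, μ, κ], [0, 0, E_g, −λᵀ], [0, 0, 0, E_h]] is an injective group homomorphism from the Heisenberg group into the symplectic group Sp(g+h, ℝ). -/

import Mathlib

open Matrix

abbrev HTriple (g h : ℕ) :=
  Matrix (Fin h) (Fin g) ℝ × Matrix (Fin h) (Fin g) ℝ × Matrix (Fin h) (Fin h) ℝ

def HCond {g h : ℕ} (x : HTriple g h) : Prop := (x.2.2 + x.2.1 * x.1ᵀ).IsSymm

def Hmul {g h : ℕ} (x y : HTriple g h) : HTriple g h :=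
  (x.1 + y.1, x.2.1 + y.2.1, x.2.2 + y.2.2 + x.1 * y.2.1ᵀ - x.2.1 * y.1ᵀ)

/-- The embedding (λ,μ,κ) ↦ [[E_g,0,0,μᵀ],[λ,E_h,μ,κ],[0,0,E_g,−λᵀ],[0,0,0,E_h]]
    into real matrices of size (g+h)+(g+h). -/
def HEmbed {g h : ℕ} (x : HTriple g h) :
    Matrix ((Fin g ⊕ Fin h) ⊕ (Fin g ⊕ Fin h)) ((Fin g ⊕ Fin h) ⊕ (Fin g ⊕ Fin h)) ℝ :=
  fromBlocks (fromBlocks 1 0 x.1 1) (fromBlocks 0 x.2.1ᵀ x.2.1 x.2.2)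
    0 (fromBlocks 1 (-x.1ᵀ) 0 1)


/-- The embedding of the Heisenberg group into the symplectic group Sp(g+h,ℝ)
    is an injective group homomorphism. -/
theorem heisenberg_embeds_into_symplectic (g h : ℕ) (hg : 0 < g) (hh : 0 < h) :
    (∀ x : HTriple g h, HCond x →
      HEmbed x ∈ Matrix.symplecticGroup (Fin g ⊕ Fin h) ℝ) ∧
    (∀ x y : HTriple g h, HCond x → HCond y →
      HEmbed (Hmul x y) = HEmbed x * HEmbed y) ∧
    (∀ x y : HTriple g h, HCond x → HCond y → HEmbed x = HEmbed y → x = y) := by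
  refine ⟨?_, ?_, ?_⟩
  · rintro ⟨l, m, k⟩ hx
    have h1 : kᵀ + l * mᵀ = k + m * lᵀ := by
      simpa [HCond, Matrix.IsSymm, transpose_add, transpose_mul] using hx
    have hk : m * lᵀ + k + (-(l * mᵀ) + -kᵀ) = 0 := by
      have e : m * lᵀ + k + (-(l * mᵀ) + -kᵀ) = (k + m * lᵀ) - (kᵀ + l * mᵀ) := by abel
      rw [e, h1, sub_self]
    rw [SymplecticGroup.mem_iff]
    simp only [HEmbed, Matrix.J, fromBlocks_multiply, fromBlocks_transpose,
      transpose_one, transpose_zero, transpose_neg, transpose_transpose,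
      Matrix.mul_one, Matrix.one_mul, Matrix.zero_mul, Matrix.mul_zero,
      Matrix.neg_mul, Matrix.mul_neg, add_zero, zero_add, neg_zero, neg_neg,
      fromBlocks_add, fromBlocks_neg]
    have hneg : (fromBlocks (-1) 0 0 (-1) : Matrix ((Fin g ⊕ Fin h)) ((Fin g ⊕ Fin h)) ℝ)
        = -1 := by
      ext (i | i) (j | j) <;> simp [fromBlocks, one_apply]
    simp [hk, hneg]
  · rintro ⟨l, m, k⟩ ⟨l', m', k'⟩ _ _
    simp only [HEmbed, Hmul, fromBlocks_multiply, transpose_add, transpose_neg,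
      transpose_mul, transpose_transpose, Matrix.mul_one, Matrix.one_mul,
      Matrix.zero_mul, Matrix.mul_zero, Matrix.neg_mul, Matrix.mul_neg,
      add_zero, zero_add, neg_add, fromBlocks_add, fromBlocks_inj, transpose_sub]
    repeat' apply And.intro
    all_goals first | rfl | trivial | abel
  · rintro ⟨l, m, k⟩ ⟨l', m', k'⟩ _ _ hxy
    simp only [HEmbed, fromBlocks_inj] at hxy
    obtain ⟨⟨-, -, e1, -⟩, ⟨-, -, e2, e3⟩, -⟩ := hxy
    simp [Prod.ext_iff, e1, e2, e3]
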